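/- For n ∈ ℕ, λ > 0, and s > (n+1)λ, the degenerate Laplace transform of t^n equals n! / [(s−λ)(s−2λ)⋯(s−nλ)(s−(n+1)λ)]. -/

import Mathlib

open MeasureTheory Set Finset Filter Topology

private lemma aux_hasDerivAt (l p x : ℝ) (hx : 0 < 1 + l * x) :
    HasDerivAt (fun t : ℝ => (1 + l * t) ^ p) (l * p * (1 + l * x) ^ (p - 1)) x := by
  have h : HasDerivAt (fun t : ℝ => 1 + l * t) l x := by
    simpa using ((hasDerivAt_id x).const_mul l).const_add 1
  exact h.rpow_const (Or.inl hx.ne')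

private lemma aux_tendsto (l q : ℝ) (hl : 0 < l) (hq : q < 0) :
    Tendsto (fun t : ℝ => (1 + l * t) ^ q) atTop (𝓝 0) := by
  have h1 : Tendsto (fun t : ℝ => 1 + l * t) atTop atTop :=
    tendsto_atTop_add_const_left _ 1 (tendsto_id.const_mul_atTop hl)
  have h2 : Tendsto (fun x : ℝ => x ^ (-(-q))) atTop (𝓝 0) :=
    tendsto_rpow_neg_atTop (by linarith)
  exact (by simpa using h2 : Tendsto (fun x : ℝ => x ^ q) atTop (𝓝 0)).comp h1

private lemma aux_pos (l t : ℝ) (hl : 0 < l) (ht : t ∈ Ioi (0:ℝ)) : 0 < 1 + l * t := by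
  have := ht.out; nlinarith

private lemma aux_integral (l p : ℝ) (hl : 0 < l) (hp : p < -1) :
    ∫ t in Ioi (0:ℝ), (1 + l * t) ^ p = -(1 / (l * (p + 1))) := by
  have key : ∫ t in Ioi (0:ℝ), (1 + l * t) ^ p
      = (0 : ℝ) - (1 + l * 0) ^ (p + 1) / (l * (p + 1)) := by
    apply integral_Ioi_of_hasDerivAt_of_nonneg'
      (g := fun t => (1 + l * t) ^ (p + 1) / (l * (p + 1)))
    · intro x hx
      have hx0 : 0 < 1 + l * x := by have := hx.out; nlinarith
      have := (aux_hasDerivAt l (p + 1) x hx0).div_const (l * (p + 1))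
      convert this using 1
      · rfl
      · rfl
      have hp1 : p + 1 < 0 := by linarith
      have hne : l * (p + 1) ≠ 0 := by
        intro h
        rcases mul_eq_zero.mp h with h' | h'
        · exact hl.ne' h'
        · exact hp1.ne h'
      rw [show p + 1 - 1 = p by ring, mul_div_cancel_left₀ _ hne]
      all_goals ring
    · intro x hx
      exact (Real.rpow_pos_of_pos (aux_pos l x hl hx) p).le
    · have h := (aux_tendsto l (p + 1) hl (by linarith)).div_const (l * (p + 1))
      simpa using h
  rw [key]
  have h1 : l * (p + 1) ≠ 0 := by
    have hp1 : p + 1 < 0 := by linarith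
    intro h
    rcases mul_eq_zero.mp h with h' | h'
    · exact hl.ne' h'
    · exact hp1.ne h'
  simp [Real.one_rpow]

private lemma aux_integrable (l p : ℝ) (hl : 0 < l) (hp : p < -1) :
    IntegrableOn (fun t : ℝ => (1 + l * t) ^ p) (Ioi 0) := by
  apply integrableOn_Ioi_deriv_of_nonneg'
    (g := fun t => (1 + l * t) ^ (p + 1) / (l * (p + 1)))
    (l := (0 : ℝ))
  · intro x hx
    have hx0 : 0 < 1 + l * x := by have := hx.out; nlinarith
    have := (aux_hasDerivAt l (p + 1) x hx0).div_const (l * (p + 1))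
    convert this using 1
    · rfl
    · rfl
    have hp1 : p + 1 < 0 := by linarith
    have hne : l * (p + 1) ≠ 0 := by
      intro h
      rcases mul_eq_zero.mp h with h' | h'
      · exact hl.ne' h'
      · exact hp1.ne h'
    rw [show p + 1 - 1 = p by ring, mul_div_cancel_left₀ _ hne]
    all_goals ring
  · intro x hx
    exact (Real.rpow_pos_of_pos (aux_pos l x hl hx) p).le
  · have h := (aux_tendsto l (p + 1) hl (by linarith)).div_const (l * (p + 1))
    simpa using h

private lemma aux_pow_le (l t : ℝ) (hl : 0 < l) (ht : 0 < t) (k : ℕ) :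
    t ^ k ≤ (1 + l * t) ^ (k : ℝ) / l ^ k := by
  rw [Real.rpow_natCast, le_div_iff₀ (by positivity), ← mul_pow]
  apply pow_le_pow_left₀ (by positivity)
  nlinarith

private lemma aux_integrable_pow (l s : ℝ) (k : ℕ) (hl : 0 < l) (hs : (k + 1) * l < s) :
    IntegrableOn (fun t : ℝ => (1 + l * t) ^ (-(s / l)) * t ^ k) (Ioi 0) := by
  have hexp : (k : ℝ) - s / l < -1 := by
    have h : (k : ℝ) + 1 < s / l := by rw [lt_div_iff₀ hl]; linarith
    linarith
  have hbound := aux_integrable l ((k : ℝ) - s / l) hl hexp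
  apply Integrable.mono' (hbound.div_const (l ^ k))
  · apply ContinuousOn.aestronglyMeasurable _ measurableSet_Ioi
    intro x hx
    have hx0 : 0 < 1 + l * x := aux_pos l x hl hx
    apply ContinuousWithinAt.mul _ ((continuous_pow k).continuousWithinAt)
    exact ((by fun_prop : Continuous fun x : ℝ => 1 + l * x).continuousWithinAt).rpow_const
      (Or.inl hx0.ne')
  · filter_upwards [ae_restrict_mem measurableSet_Ioi] with t ht
    have ht0 : (0:ℝ) < t := ht
    have hb : 0 < 1 + l * t := aux_pos l t hl ht
    rw [Real.norm_eq_abs, abs_of_nonneg (by positivity)]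
    have h1 : t ^ k ≤ (1 + l * t) ^ (k : ℝ) / l ^ k := aux_pow_le l t hl ht0 k
    calc (1 + l * t) ^ (-(s / l)) * t ^ k
        ≤ (1 + l * t) ^ (-(s / l)) * ((1 + l * t) ^ (k : ℝ) / l ^ k) := by
          apply mul_le_mul_of_nonneg_left h1 (by positivity)
      _ = (1 + l * t) ^ ((k : ℝ) - s / l) / l ^ k := by
          rw [mul_div_assoc', ← Real.rpow_add hb,
            show -(s/l) + (k:ℝ) = (k:ℝ) - s/l by ring]

theorem degLaplace_pow (n : ℕ) (l s : ℝ) (hl : 0 < l) (hs : (n + 1) * l < s) :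
    ∫ t in Ioi (0 : ℝ), (1 + l * t) ^ (-(s / l)) * t ^ n =
      (n.factorial : ℝ) / ∏ j ∈ range (n + 1), (s - (j + 1) * l) := by
  induction n generalizing s with
  | zero =>
    simp only [pow_zero, mul_one, Nat.factorial_zero, Nat.cast_one, range_one, prod_singleton,
      Nat.cast_zero, zero_add, one_mul]
    have hp : -(s / l) < -1 := by
      rw [neg_lt_neg_iff, lt_div_iff₀ hl]
      push_cast at hs; linarith
    rw [aux_integral l _ hl hp]
    have h1 : l * (-(s / l) + 1) = -(s - l) := by
      field_simp
      all_goals ring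
    rw [h1, div_neg, neg_neg]
    norm_num
  | succ n ih =>
    have hs' : ((n : ℝ) + 1) * l < s - l := by push_cast at hs ⊢; nlinarith
    have hsl : 0 < s - l := by
      have : (0:ℝ) < ((n:ℝ)+1) * l := by positivity
      linarith
    have hIBP : ∫ t in Ioi (0:ℝ), t ^ (n+1) * (1 + l * t) ^ (-(s / l))
        = (0:ℝ) - 0 - ∫ t in Ioi (0:ℝ),
            ((n:ℝ)+1) * t ^ n * ((1 + l * t) ^ (1 - s / l) / (l - s)) := by
      apply integral_Ioi_mul_deriv_eq_deriv_mul
        (u := fun t => t ^ (n+1)) (u' := fun t => ((n:ℝ)+1) * t ^ n)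
        (v := fun t => (1 + l * t) ^ (1 - s / l) / (l - s))
        (v' := fun t => (1 + l * t) ^ (-(s / l)))
      · intro x _
        have := hasDerivAt_pow (n+1) x
        simpa using this
      · intro x hx
        have hx0 : 0 < 1 + l * x := aux_pos l x hl hx
        have := (aux_hasDerivAt l (1 - s / l) x hx0).div_const (l - s)
        convert this using 1
        have hls : l - s ≠ 0 := by intro h; nlinarith
        have hl0 : l ≠ 0 := hl.ne'
        rw [show (1 - s / l - 1) = -(s/l) by ring]
        field_simp
        all_goals ring
      · have h := aux_integrable_pow l s (n+1) hl (by push_cast at hs ⊢; linarith)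
        apply IntegrableOn.congr_fun h _ measurableSet_Ioi
        intro x _
        simp [Pi.mul_apply, mul_comm]
      · have h1 := aux_integrable_pow l (s - l) n hl hs'
        have h2 : IntegrableOn
            (fun x : ℝ => ((n:ℝ)+1) / (l - s) * ((1 + l * x) ^ (-((s - l) / l)) * x ^ n))
            (Ioi 0) := h1.const_mul (((n:ℝ)+1) / (l - s))
        apply IntegrableOn.congr_fun h2 _ measurableSet_Ioi
        intro x hx
        have hx0 : 0 < 1 + l * x := aux_pos l x hl hx
        simp only [Pi.mul_apply]
        rw [show (1 - s / l) = -((s - l)/l) by field_simp; ring]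
        ring
      · have hca : ContinuousAt
            (fun t : ℝ => t ^ (n+1) * ((1 + l * t) ^ (1 - s / l) / (l - s))) 0 := by
          apply ContinuousAt.mul (by fun_prop)
          apply ContinuousAt.div_const
          have h0 : (1 : ℝ) + l * 0 ≠ 0 := by norm_num
          exact ContinuousAt.rpow_const (by fun_prop) (Or.inl h0)
        have h2 : Tendsto (fun t : ℝ => t ^ (n+1) * ((1 + l * t) ^ (1 - s / l) / (l - s)))
            (𝓝[>] (0:ℝ))
            (𝓝 ((0:ℝ) ^ (n+1) * ((1 + l * 0) ^ (1 - s / l) / (l - s)))) :=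
          hca.tendsto.mono_left nhdsWithin_le_nhds
        simpa [Pi.mul_def] using h2
      · have key : Tendsto (fun t : ℝ =>
            (t ^ (n+1) * (1 + l * t) ^ (1 - s / l)) / (l - s)) atTop (𝓝 (0 / (l - s))) := by
          apply Tendsto.div_const
          have hq : ((n:ℝ) + 2) - s / l < 0 := by
            rw [sub_neg, lt_div_iff₀ hl]; push_cast at hs; linarith
          have hz := aux_tendsto l (((n:ℝ) + 2) - s / l) hl hq
          apply squeeze_zero' (g := fun t => (1 + l * t) ^ (((n:ℝ)+2) - s / l) / l ^ (n+1))
          · filter_upwards [eventually_gt_atTop (0:ℝ)] with t ht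
            have hb : 0 < 1 + l * t := by nlinarith
            positivity
          · filter_upwards [eventually_gt_atTop (0:ℝ)] with t ht
            have hb : 0 < 1 + l * t := by nlinarith
            calc t ^ (n+1) * (1 + l * t) ^ (1 - s / l)
                ≤ ((1 + l * t) ^ (((n+1 : ℕ)) : ℝ) / l ^ (n+1)) * (1 + l * t) ^ (1 - s / l) := by
                  apply mul_le_mul_of_nonneg_right (aux_pow_le l t hl ht (n+1))
                  positivity
              _ = (1 + l * t) ^ (((n:ℝ)+2) - s / l) / l ^ (n+1) := by
                  rw [div_mul_eq_mul_div, ← Real.rpow_add hb]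
                  push_cast; ring_nf
          · simpa using hz.div_const (l ^ (n+1))
        rw [zero_div] at key
        convert key using 2 with t
        simp [Pi.mul_apply, mul_div_assoc]
    have hmain : ∫ t in Ioi (0:ℝ), (1 + l * t) ^ (-(s / l)) * t ^ (n+1)
        = (((n:ℝ)+1) / (s - l)) * ∫ t in Ioi (0:ℝ), (1 + l * t) ^ (-((s-l) / l)) * t ^ n := by
      rw [show (∫ t in Ioi (0:ℝ), (1 + l * t) ^ (-(s / l)) * t ^ (n+1))
          = ∫ t in Ioi (0:ℝ), t ^ (n+1) * (1 + l * t) ^ (-(s / l)) by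
            congr 1; ext t; ring]
      rw [hIBP, ← integral_const_mul]
      rw [show (0:ℝ) - 0 - (∫ t in Ioi (0:ℝ),
            ((n:ℝ)+1) * t ^ n * ((1 + l * t) ^ (1 - s / l) / (l - s)))
          = ∫ t in Ioi (0:ℝ), -(((n:ℝ)+1) * t ^ n * ((1 + l * t) ^ (1 - s / l) / (l - s)))
          by rw [integral_neg]; ring]
      apply setIntegral_congr_fun measurableSet_Ioi
      intro t ht
      have hx0 : 0 < 1 + l * t := aux_pos l t hl ht
      have hls : l - s ≠ 0 := by intro h; nlinarith
      rw [show (-((s - l)/l)) = 1 - s / l by field_simp; ring]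
      field_simp
      ring
    rw [hmain, ih (s - l) hs']
    rw [Finset.prod_range_succ' (fun j => s - ((j:ℝ) + 1) * l)]
    have hprod : ∏ j ∈ range (n+1), (s - l - ((j:ℝ) + 1) * l)
        = ∏ j ∈ range (n+1), (s - (((j:ℝ) + 1) + 1) * l) := by
      apply Finset.prod_congr rfl; intro j _; ring
    have hne : ∏ j ∈ range (n+1), (s - l - ((j:ℝ) + 1) * l) ≠ 0 := by
      apply Finset.prod_ne_zero_iff.mpr
      intro j hj
      have hj' : (j:ℝ) + 1 ≤ (n:ℝ) + 1 := by
        have := Finset.mem_range.mp hj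
        have : (j:ℝ) ≤ (n:ℝ) := by exact_mod_cast Nat.lt_succ_iff.mp this
        linarith
      push_cast at hs
      have h2 : ((j:ℝ) + 1) * l ≤ ((n:ℝ) + 1) * l := by nlinarith
      intro h; nlinarith
    rw [Nat.factorial_succ]
    push_cast
    rw [show ∏ x ∈ range (n + 1), (s - ((x:ℝ) + 1 + 1) * l)
        = ∏ j ∈ range (n+1), (s - l - ((j:ℝ) + 1) * l) by
          rw [hprod]]
    have hsl' : s - l ≠ 0 := hsl.ne'
    rw [div_mul_div_comm]
    congr 1 <;> ring
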